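/- Let H : B² → ℂ² be a map in the class M₋, with Taylor expansion at the origin H(z) = (-z₁ + Σ_{|α|≥2} q¹_α z^α, -z₂ + Σ_{|α|≥2} q²_α z^α). Then the shearing H^{[c]}(z₁,z₂) = (-z₁ + q¹_{0,2} z₂², -z₂), restricted to B², also belongs to M₋; that is, Re⟨H^{[c]}(z), z⟩ ≤ 0 for all z ∈ B². -/

import Mathlib

open Complex Metric Set Filter Asymptotics
open scoped Topology Real

noncomputable section

/-- The open unit ball in `ℂ²`. -/
def B2 : Set (ℂ × ℂ) := {z | ‖z.1‖ ^ 2 + ‖z.2‖ ^ 2 < 1}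

/-- The class `M₋` of holomorphic maps `H : B² → ℂ²` with `H(0) = 0`, `dH₀ = -id`,
and `Re⟨H(z), z⟩ ≤ 0` on `B²`. -/
def MminusClass (H : ℂ × ℂ → ℂ × ℂ) : Prop :=
  DifferentiableOn ℂ H B2 ∧ H 0 = 0 ∧
  (∀ z : ℂ × ℂ, fderiv ℂ H 0 z = -z) ∧
  ∀ z ∈ B2, ((H z).1 * (starRingEnd ℂ) z.1 + (H z).2 * (starRingEnd ℂ) z.2).re ≤ 0

/-- The coefficient `q¹_{0,2} = (1/2)·∂²H₁/∂z₂²(0)` of `z₂²` in the first component of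
the Taylor expansion of `H` at the origin. -/
def shearCoef (H : ℂ × ℂ → ℂ × ℂ) : ℂ :=
  (1 / 2 : ℂ) * iteratedDeriv 2 (fun w : ℂ => (H (0, w)).1) 0

lemma isOpen_B2 : IsOpen B2 := by
  have : Continuous fun z : ℂ × ℂ => ‖z.1‖ ^ 2 + ‖z.2‖ ^ 2 := by fun_prop
  exact isOpen_lt this continuous_const

lemma zero_mem_B2 : (0 : ℂ × ℂ) ∈ B2 := by simp [B2]

lemma tendsto_div_pow_aux {f : ℂ → ℂ} {p : FormalMultilinearSeries ℂ ℂ ℂ}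
    (h : HasFPowerSeriesAt f p 0) (n : ℕ) (hc : ∀ k < n, p.coeff k = 0) :
    Filter.Tendsto (fun w => f w / w ^ n) (𝓝[≠] (0:ℂ)) (𝓝 (p.coeff n)) := by
  have hO := h.isBigO_sub_partialSum_pow (n + 1)
  simp only [zero_add] at hO
  have hps : ∀ y : ℂ, p.partialSum (n + 1) y = p.coeff n * y ^ n := by
    intro y
    rw [FormalMultilinearSeries.partialSum, Finset.sum_range_succ]
    have h0 : ∀ k ∈ Finset.range n, (p k fun _ => y) = 0 := fun k hk => by
      rw [FormalMultilinearSeries.apply_eq_pow_smul_coeff, hc k (Finset.mem_range.mp hk),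
        smul_zero]
    rw [Finset.sum_eq_zero h0, zero_add, FormalMultilinearSeries.apply_eq_pow_smul_coeff,
      smul_eq_mul, mul_comm]
  rw [isBigO_iff] at hO
  obtain ⟨C, hC⟩ := hO
  have key : Tendsto (fun w : ℂ => f w / w ^ n - p.coeff n) (𝓝[≠] (0:ℂ)) (𝓝 0) := by
    apply squeeze_zero_norm' (a := fun w : ℂ => C * ‖w‖)
    · filter_upwards [nhdsWithin_le_nhds hC, self_mem_nhdsWithin] with w hw hw0
      have hw0' : (w : ℂ) ≠ 0 := hw0
      have hwn : ‖w‖ ^ n ≠ 0 := pow_ne_zero _ (norm_ne_zero_iff.mpr hw0')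
      have heq : f w / w ^ n - p.coeff n = (f w - p.partialSum (n + 1) w) / w ^ n := by
        rw [hps]
        field_simp
      rw [heq, norm_div, norm_pow]
      rw [Real.norm_of_nonneg (by positivity : (0:ℝ) ≤ ‖w‖ ^ (n+1))] at hw
      calc ‖f w - p.partialSum (n + 1) w‖ / ‖w‖ ^ n ≤ (C * ‖w‖ ^ (n + 1)) / ‖w‖ ^ n := by
              exact div_le_div_of_nonneg_right hw (by positivity)
        _ = C * ‖w‖ := by
              rw [pow_succ, mul_div_assoc, mul_comm (‖w‖ ^ n) ‖w‖, mul_div_assoc, div_self hwn,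
                mul_one]
    · have : Tendsto (fun w : ℂ => C * ‖w‖) (𝓝 (0:ℂ)) (𝓝 (C * ‖(0:ℂ)‖)) :=
        (continuous_norm.tendsto 0).const_mul C
      simpa using this.mono_left nhdsWithin_le_nhds
  have := key.add_const (p.coeff n)
  simpa using this

set_option maxHeartbeats 2000000 in
lemma key_ineq (H : ℂ × ℂ → ℂ × ℂ) (hdiff : DifferentiableOn ℂ H B2) (h0 : H 0 = 0)
    (hfder : ∀ z : ℂ × ℂ, fderiv ℂ H 0 z = -z)
    (hineq : ∀ z ∈ B2, ((H z).1 * (starRingEnd ℂ) z.1 + (H z).2 * (starRingEnd ℂ) z.2).re ≤ 0)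
    (z : ℂ × ℂ) (hz : z ∈ B2) :
    ((-z.1 + shearCoef H * z.2 ^ 2) * (starRingEnd ℂ) z.1 + (-z.2) * (starRingEnd ℂ) z.2).re
      ≤ 0 := by
  have hz' : ‖z.1‖ ^ 2 + ‖z.2‖ ^ 2 < 1 := hz
  have hHd : DifferentiableAt ℂ H 0 :=
    hdiff.differentiableAt (isOpen_B2.mem_nhds zero_mem_B2)
  have hfd : HasFDerivAt H (fderiv ℂ H 0) 0 := hHd.hasFDerivAt
  set q : ℂ := shearCoef H with hqdef
  set γ : ℂ → ℂ × ℂ := fun w => (w ^ 2 * z.1, w * z.2) with hγdef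
  set G : ℂ → ℂ := fun w => (starRingEnd ℂ) z.1 * w * (H (γ w)).1
      + (starRingEnd ℂ) z.2 * w ^ 2 * (H (γ w)).2 with hGdef
  set T : ℂ := (starRingEnd ℂ) z.1 * (q * z.2 ^ 2 - z.1)
      + (starRingEnd ℂ) z.2 * (-z.2) with hTdef
  -- membership of the curve in B2
  have hmem : ∀ w : ℂ, ‖w‖ ≤ 1 → γ w ∈ B2 := by
    intro w hw
    have h1 : ‖w ^ 2 * z.1‖ ^ 2 + ‖w * z.2‖ ^ 2 < 1 := by
      rw [norm_mul, norm_mul, norm_pow]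
      have h1 : (0:ℝ) ≤ ‖w‖ := norm_nonneg w
      have h2 : (0:ℝ) ≤ ‖z.1‖ := norm_nonneg z.1
      have h3 : (0:ℝ) ≤ ‖z.2‖ := norm_nonneg z.2
      have hw2 : ‖w‖ ^ 2 ≤ 1 := by nlinarith
      have e1 : ‖w‖ ^ 2 * ‖z.1‖ ≤ ‖z.1‖ := by nlinarith
      have e2 : ‖w‖ * ‖z.2‖ ≤ ‖z.2‖ := by nlinarith
      have k1 : (‖w‖ ^ 2 * ‖z.1‖) ^ 2 ≤ ‖z.1‖ ^ 2 :=
        pow_le_pow_left₀ (by positivity) e1 2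
      have k2 : (‖w‖ * ‖z.2‖) ^ 2 ≤ ‖z.2‖ ^ 2 :=
        pow_le_pow_left₀ (by positivity) e2 2
      linarith
    exact h1
  have hγd : Differentiable ℂ γ := by fun_prop
  have hHγ : DifferentiableOn ℂ (fun w => H (γ w)) (closedBall (0:ℂ) 1) := by
    apply hdiff.comp hγd.differentiableOn
    intro w hw
    exact hmem w (by simpa [mem_closedBall_zero_iff] using hw)
  have hGdiff : DifferentiableOn ℂ G (closedBall (0:ℂ) 1) := by
    apply DifferentiableOn.add
    · exact (((differentiable_const _).mul differentiable_id).differentiableOn).mul hHγ.fst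
    · exact (((differentiable_const _).mul (differentiable_id.pow 2)).differentiableOn).mul
        hHγ.snd
  -- power series of G on the unit ball
  have hpball : HasFPowerSeriesOnBall G (cauchyPowerSeries G 0 1) 0 1 := by
    have := hGdiff.hasFPowerSeriesOnBall (R := 1) one_pos
    simpa using this
  set p : FormalMultilinearSeries ℂ ℂ ℂ := cauchyPowerSeries G 0 1 with hpdef
  have hpat : HasFPowerSeriesAt G p 0 := hpball.hasFPowerSeriesAt
  have hγ0 : γ 0 = 0 := by simp [hγdef]
  -- derivative of H ∘ γ at 0
  have hγd0 : HasDerivAt γ ((0:ℂ), z.2) 0 := by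
    have hd1 : HasDerivAt (fun w : ℂ => w ^ 2 * z.1) 0 0 := by
      simpa using (hasDerivAt_pow 2 (0:ℂ)).mul_const z.1
    have hd2 : HasDerivAt (fun w : ℂ => w * z.2) z.2 0 := by
      simpa using (hasDerivAt_id (0:ℂ)).mul_const z.2
    exact hd1.prodMk hd2
  have hcomp : HasDerivAt (fun w => H (γ w)) ((0:ℂ), -z.2) 0 := by
    have hfd' : HasFDerivAt H (fderiv ℂ H 0) (γ 0) := by rw [hγ0]; exact hfd
    have := hfd'.comp_hasDerivAt 0 hγd0
    have hv : fderiv ℂ H 0 ((0:ℂ), z.2) = ((0:ℂ), -z.2) := by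
      rw [hfder]; exact Prod.ext (by simp) rfl
    rwa [hv] at this
  have d1a : HasDerivAt (fun w => (H (γ w)).1) 0 0 := by
    have := (ContinuousLinearMap.fst ℂ ℂ ℂ).hasFDerivAt.comp_hasDerivAt 0 hcomp
    simpa [Function.comp_def] using this
  have d1b : HasDerivAt (fun w => (H (γ w)).2) (-z.2) 0 := by
    have := (ContinuousLinearMap.snd ℂ ℂ ℂ).hasFDerivAt.comp_hasDerivAt 0 hcomp
    simpa [Function.comp_def] using this
  have hHγ00 : (H (γ 0)).1 = 0 := by rw [hγ0, h0]; rfl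
  have hHγ02 : (H (γ 0)).2 = 0 := by rw [hγ0, h0]; rfl
  -- slope limits
  have lim1a : Tendsto (fun w => (H (γ w)).1 / w) (𝓝[≠] (0:ℂ)) (𝓝 0) := by
    have := hasDerivAt_iff_tendsto_slope.mp d1a
    apply this.congr'
    filter_upwards [self_mem_nhdsWithin] with w hw
    simp [slope_def_field, hHγ00]
  have lim2 : Tendsto (fun w => (H (γ w)).2 / w) (𝓝[≠] (0:ℂ)) (𝓝 (-z.2)) := by
    have := hasDerivAt_iff_tendsto_slope.mp d1b
    apply this.congr'
    filter_upwards [self_mem_nhdsWithin] with w hw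
    simp [slope_def_field, hHγ02]
  have limc : Tendsto (fun w => (H (γ w)).2) (𝓝[≠] (0:ℂ)) (𝓝 0) := by
    have := d1b.continuousAt.tendsto
    rw [hHγ02] at this
    exact this.mono_left nhdsWithin_le_nhds
  -- coefficients 0, 1, 2 of p vanish
  have coeff0 : p.coeff 0 = 0 := by
    have := hpat.coeff_zero (fun _ => 1)
    have hG0 : G 0 = 0 := by simp [hGdef]
    rw [hG0] at this
    exact this
  have coeff1 : p.coeff 1 = 0 := by
    have hGd : HasDerivAt G 0 0 := by
      have e1 : HasDerivAt (fun w : ℂ => (starRingEnd ℂ) z.1 * w) ((starRingEnd ℂ) z.1) 0 := by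
        simpa using (hasDerivAt_id (0:ℂ)).const_mul ((starRingEnd ℂ) z.1)
      have e2 : HasDerivAt (fun w : ℂ => (starRingEnd ℂ) z.2 * w ^ 2) 0 0 := by
        simpa using (hasDerivAt_pow 2 (0:ℂ)).const_mul ((starRingEnd ℂ) z.2)
      have := (e1.fun_mul d1a).fun_add (e2.fun_mul d1b)
      simpa [hHγ00, hHγ02] using this
    have := hpat.deriv
    rw [hGd.deriv] at this
    exact this.symm
  have coeff2 : p.coeff 2 = 0 := by
    have l2 := tendsto_div_pow_aux hpat 2 (by
      intro k hk
      interval_cases k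
      · exact coeff0
      · exact coeff1)
    have l2' : Tendsto (fun w => G w / w ^ 2) (𝓝[≠] (0:ℂ)) (𝓝 0) := by
      have := (lim1a.const_mul ((starRingEnd ℂ) z.1)).add (limc.const_mul ((starRingEnd ℂ) z.2))
      simp only [mul_zero, add_zero] at this
      apply this.congr'
      filter_upwards [self_mem_nhdsWithin] with w hw
      have hw' : (w:ℂ) ≠ 0 := hw
      simp only [hGdef]
      field_simp
    exact tendsto_nhds_unique l2 l2'
  -- the crucial limit for the first component
  have lim1 : Tendsto (fun w => (H (γ w)).1 / w ^ 2) (𝓝[≠] (0:ℂ)) (𝓝 (q * z.2 ^ 2 - z.1)) := by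
    classical
    -- the pure second-variable slice
    set u : ℂ → ℂ := fun t => (H (0, t)).1 with hudef
    have hu_mapsto : ∀ t : ℂ, t ∈ ball (0:ℂ) 1 → ((0:ℂ), t) ∈ B2 := by
      intro t ht
      rw [mem_ball_zero_iff] at ht
      have h1 : ‖((0:ℂ), t).1‖ ^ 2 + ‖((0:ℂ), t).2‖ ^ 2 < 1 := by
        simp only
        rw [norm_zero]
        nlinarith [norm_nonneg t]
      exact h1
    have hudiff : DifferentiableOn ℂ u (ball (0:ℂ) 1) := by
      have hemb : Differentiable ℂ (fun t : ℂ => (((0:ℂ)), t)) := by fun_prop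
      exact (hdiff.comp hemb.differentiableOn hu_mapsto).fst
    have hu0 : u 0 = 0 := by
      show (H ((0:ℂ), (0:ℂ))).1 = 0
      rw [show ((0:ℂ), (0:ℂ)) = (0 : ℂ × ℂ) from rfl, h0]
      rfl
    have hud : HasDerivAt u 0 0 := by
      have hc : HasDerivAt (fun t : ℂ => (((0:ℂ)), t)) (((0:ℂ), (1:ℂ))) 0 :=
        (hasDerivAt_const (0:ℂ) (0:ℂ)).prodMk (hasDerivAt_id 0)
      have hfd' : HasFDerivAt H (fderiv ℂ H 0) ((0:ℂ), (0:ℂ)) := hfd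
      have hcm := hfd'.comp_hasDerivAt 0 hc
      have h2 := (ContinuousLinearMap.fst ℂ ℂ ℂ).hasFDerivAt.comp_hasDerivAt 0 hcm
      simp only [hfder] at h2
      simpa [Function.comp_def] using h2
    have hu_an : AnalyticAt ℂ u 0 := hudiff.analyticAt (isOpen_ball.mem_nhds (by simp))
    obtain ⟨pu, hpu⟩ := hu_an
    obtain ⟨ru, hpub⟩ := hpu
    have hpu : HasFPowerSeriesAt u pu 0 := hpub.hasFPowerSeriesAt
    have coeffu2 : pu.coeff 2 = q := by
      have hfs := hpub.factorial_smul (1:ℂ) 2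
      have hid : iteratedDeriv 2 u 0 = iteratedFDeriv ℂ 2 u 0 (fun _ => 1) :=
        iteratedDeriv_eq_iteratedFDeriv
      have hq2 : q = (1/2 : ℂ) * iteratedDeriv 2 u 0 := rfl
      have h2 : iteratedDeriv 2 u 0 = 2 * pu.coeff 2 := by
        rw [hid, ← hfs]
        have hcoe : (pu 2 fun _ => (1:ℂ)) = pu.coeff 2 := rfl
        rw [hcoe, nsmul_eq_mul]
        norm_num [Nat.factorial]
      rw [hq2, h2]
      ring
    have hulim : Tendsto (fun t => u t / t ^ 2) (𝓝[≠] (0:ℂ)) (𝓝 q) := by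
      have h := tendsto_div_pow_aux hpu 2 (by
        intro k hk
        interval_cases k
        · exact (hpu.coeff_zero (fun _ => 1)).trans hu0
        · have h1 := hpu.deriv
          rw [hud.deriv] at h1
          exact h1.symm)
      rwa [coeffu2] at h
    have limU : Tendsto (fun w => u (w * z.2) / w ^ 2) (𝓝[≠] (0:ℂ)) (𝓝 (q * z.2 ^ 2)) := by
      rcases eq_or_ne z.2 0 with h2 | h2
      · simp only [h2, mul_zero, hu0, zero_div]
        simpa using (tendsto_const_nhds : Tendsto (fun _ : ℂ => (0:ℂ)) (𝓝[≠] (0:ℂ)) _)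
      · have hmap : Tendsto (fun w : ℂ => w * z.2) (𝓝[≠] (0:ℂ)) (𝓝[≠] (0:ℂ)) := by
          rw [tendsto_nhdsWithin_iff]
          constructor
          · have h3 : Tendsto (fun w : ℂ => w * z.2) (𝓝 0) (𝓝 (0 * z.2)) :=
              (continuous_mul_right z.2).tendsto 0
            rw [zero_mul] at h3
            exact h3.mono_left nhdsWithin_le_nhds
          · filter_upwards [self_mem_nhdsWithin] with w hw
            exact mul_ne_zero hw h2
        have hcomp := (hulim.comp hmap).mul_const (z.2 ^ 2)
        apply hcomp.congr'
        filter_upwards [self_mem_nhdsWithin] with w hw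
        have hw' : (w:ℂ) ≠ 0 := hw
        show u (w * z.2) / (w * z.2) ^ 2 * z.2 ^ 2 = u (w * z.2) / w ^ 2
        field_simp
    -- family of slices in the first variable
    set F : ℂ → ℂ → ℂ := fun w s => (H (s * z.1, w * z.2)).1 with hFdef
    have hFmem : ∀ w : ℂ, ‖w‖ ≤ 1 → ∀ s : ℂ, s ∈ closedBall (0:ℂ) 1 →
        (s * z.1, w * z.2) ∈ B2 := by
      intro w hw s hs
      rw [mem_closedBall_zero_iff] at hs
      have h1 : ‖(s * z.1, w * z.2).1‖ ^ 2 + ‖(s * z.1, w * z.2).2‖ ^ 2 < 1 := by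
        simp only
        rw [norm_mul, norm_mul]
        have e1 : ‖s‖ * ‖z.1‖ ≤ ‖z.1‖ := by nlinarith [norm_nonneg s, norm_nonneg z.1]
        have e2 : ‖w‖ * ‖z.2‖ ≤ ‖z.2‖ := by nlinarith [norm_nonneg w, norm_nonneg z.2]
        have k1 := pow_le_pow_left₀ (by positivity) e1 2
        have k2 := pow_le_pow_left₀ (by positivity) e2 2
        linarith
      exact h1
    have hFdiff : ∀ w : ℂ, ‖w‖ ≤ 1 → DifferentiableOn ℂ (F w) (ball (0:ℂ) 1) := by
      intro w hw
      have hemb : Differentiable ℂ (fun s : ℂ => (s * z.1, w * z.2)) := by fun_prop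
      exact (hdiff.comp hemb.differentiableOn (fun s hs =>
        hFmem w hw s (ball_subset_closedBall hs))).fst
    have hF0at : DifferentiableAt ℂ (F 0) 0 :=
      (hFdiff 0 (by simp)).differentiableAt (isOpen_ball.mem_nhds (by simp))
    have hΦuni : TendstoUniformlyOn (fun w s => dslope (F w) 0 s) (dslope (F 0) 0)
        (𝓝[≠] (0:ℂ)) (ball (0:ℂ) 1) := by
      rw [Metric.tendstoUniformlyOn_iff]
      intro ε hε
      set K : Set (ℂ × ℂ) := closedBall (0:ℂ) ‖z.1‖ ×ˢ closedBall (0:ℂ) ‖z.2‖ with hKdef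
      have hKcomp : IsCompact K := (isCompact_closedBall _ _).prod (isCompact_closedBall _ _)
      have hKsub : K ⊆ B2 := by
        rintro ⟨a, b⟩ ⟨ha, hb⟩
        rw [mem_closedBall_zero_iff] at ha hb
        have h1 : ‖((a,b) : ℂ × ℂ).1‖ ^ 2 + ‖((a,b) : ℂ × ℂ).2‖ ^ 2 < 1 := by
          simp only
          have k1 := pow_le_pow_left₀ (norm_nonneg a) ha 2
          have k2 := pow_le_pow_left₀ (norm_nonneg b) hb 2
          linarith
        exact h1
      have hUC := hKcomp.uniformContinuousOn_of_continuous (hdiff.continuousOn.mono hKsub)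
      rw [Metric.uniformContinuousOn_iff] at hUC
      obtain ⟨δ, hδpos, hδ⟩ := hUC (ε/4) (by linarith)
      have hev : ∀ᶠ w : ℂ in 𝓝[≠] (0:ℂ), ‖w‖ < min 1 (δ / (‖z.2‖ + 1)) := by
        have hpos : 0 < min 1 (δ / (‖z.2‖ + 1)) := by
          apply lt_min one_pos
          positivity
        filter_upwards [nhdsWithin_le_nhds (Metric.ball_mem_nhds (0:ℂ) hpos)] with w hw
        exact mem_ball_zero_iff.mp hw
      filter_upwards [hev] with w hw s hs
      have hw1 : ‖w‖ ≤ 1 := (lt_min_iff.mp hw).1.le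
      have hwδ : ‖w‖ * ‖z.2‖ < δ := by
        have h1 := (lt_min_iff.mp hw).2
        have h2 : (0:ℝ) ≤ ‖z.2‖ := norm_nonneg _
        have h3 : (0:ℝ) ≤ ‖w‖ := norm_nonneg _
        have h4 : ‖w‖ * (‖z.2‖ + 1) < δ := (lt_div_iff₀ (by positivity)).mp h1
        nlinarith
      set E : ℂ → ℂ := fun t => F w t - F 0 t with hEdef
      have hEbound : ∀ t : ℂ, t ∈ closedBall (0:ℂ) 1 → ‖E t‖ ≤ ε/4 := by
        intro t ht
        rw [mem_closedBall_zero_iff] at ht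
        have hp1 : ((t * z.1, w * z.2) : ℂ × ℂ) ∈ K := by
          constructor
          · rw [mem_closedBall_zero_iff, norm_mul]
            nlinarith [norm_nonneg z.1, norm_nonneg t]
          · rw [mem_closedBall_zero_iff, norm_mul]
            nlinarith [norm_nonneg z.2, norm_nonneg w]
        have hp2 : ((t * z.1, (0:ℂ) * z.2) : ℂ × ℂ) ∈ K := by
          constructor
          · rw [mem_closedBall_zero_iff, norm_mul]
            nlinarith [norm_nonneg z.1, norm_nonneg t]
          · rw [mem_closedBall_zero_iff]
            simp [norm_nonneg]
        have hdist : dist ((t * z.1, w * z.2) : ℂ × ℂ) ((t * z.1, (0:ℂ) * z.2) : ℂ × ℂ) < δ := by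
          rw [Prod.dist_eq]
          have hd2 : dist (w * z.2) ((0:ℂ) * z.2) < δ := by
            rw [zero_mul, dist_zero_right, norm_mul]
            exact hwδ
          simp only [dist_self]
          exact max_lt hδpos hd2
        have hHd2 := hδ _ hp1 _ hp2 hdist
        calc ‖E t‖ = dist ((H (t * z.1, w * z.2)).1) ((H (t * z.1, (0:ℂ) * z.2)).1) := by
              rw [dist_eq_norm]
          _ ≤ dist (H (t * z.1, w * z.2)) (H (t * z.1, (0:ℂ) * z.2)) := by
              rw [Prod.dist_eq]
              exact le_max_left _ _
          _ ≤ ε/4 := hHd2.le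
      have hEdiff : DifferentiableOn ℂ E (ball (0:ℂ) 1) :=
        (hFdiff w hw1).sub (hFdiff 0 (by simp))
      have hmapsE : MapsTo E (ball (0:ℂ) 1) (ball (E 0) (3 * (ε/4))) := by
        intro t ht
        rw [mem_ball, dist_eq_norm]
        have h1 := hEbound t (ball_subset_closedBall ht)
        have h2 := hEbound 0 (by simp)
        calc ‖E t - E 0‖ ≤ ‖E t‖ + ‖E 0‖ := norm_sub_le _ _
          _ ≤ ε/4 + ε/4 := add_le_add h1 h2
          _ < 3 * (ε/4) := by linarith
      have hSch : ∀ t ∈ ball (0:ℂ) 1, ‖dslope E 0 t‖ ≤ 3 * (ε/4) := by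
        intro t ht
        have h1 := Complex.norm_dslope_le_div_of_mapsTo_ball hEdiff (hmapsE.mono_right ball_subset_closedBall) ht
        simpa using h1
      have hident : dslope (F w) 0 s - dslope (F 0) 0 s = dslope E 0 s := by
        rcases eq_or_ne s 0 with rfl | hne
        · rw [dslope_same, dslope_same, dslope_same]
          have hfw : DifferentiableAt ℂ (F w) 0 :=
            (hFdiff w hw1).differentiableAt (isOpen_ball.mem_nhds (by simp))
          rw [hEdef]
          rw [deriv_fun_sub hfw hF0at]
        · rw [dslope_of_ne _ hne, dslope_of_ne _ hne, dslope_of_ne _ hne]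
          simp only [slope_def_field, hEdef]
          rw [div_sub_div_same]
          congr 1
          ring
      rw [dist_eq_norm]
      calc ‖dslope (F 0) 0 s - dslope (F w) 0 s‖
          = ‖dslope (F w) 0 s - dslope (F 0) 0 s‖ := norm_sub_rev _ _
        _ = ‖dslope E 0 s‖ := by rw [hident]
        _ ≤ 3 * (ε/4) := hSch s hs
        _ < ε := by linarith
    have hΦcont : ContinuousWithinAt (dslope (F 0) 0) (ball (0:ℂ) 1) 0 := by
      have h1 : DifferentiableOn ℂ (dslope (F 0) 0) (ball (0:ℂ) 1) :=
        (differentiableOn_dslope (isOpen_ball.mem_nhds (by simp))).mpr (hFdiff 0 (by simp))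
      exact h1.continuousOn 0 (by simp)
    have hgmap : Tendsto (fun w : ℂ => w ^ 2) (𝓝[≠] (0:ℂ)) (𝓝[ball (0:ℂ) 1] 0) := by
      rw [tendsto_nhdsWithin_iff]
      constructor
      · have h1 : Tendsto (fun w : ℂ => w ^ 2) (𝓝 0) (𝓝 0) := by
          simpa using (continuous_pow 2).tendsto (0:ℂ)
        exact h1.mono_left nhdsWithin_le_nhds
      · have hev : ∀ᶠ w : ℂ in 𝓝[≠] (0:ℂ), ‖w‖ < 1 := by
          filter_upwards [nhdsWithin_le_nhds (Metric.ball_mem_nhds (0:ℂ) one_pos)] with w hw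
          exact mem_ball_zero_iff.mp hw
        filter_upwards [hev] with w hw
        rw [mem_ball_zero_iff, norm_pow]
        nlinarith [norm_nonneg w]
    have limA0 : Tendsto (fun w : ℂ => dslope (F w) 0 (w ^ 2)) (𝓝[≠] (0:ℂ))
        (𝓝 (dslope (F 0) 0 0)) := hΦuni.tendsto_comp hΦcont hgmap
    have hval0 : dslope (F 0) 0 0 = -z.1 := by
      rw [dslope_same]
      have hc : HasDerivAt (fun s : ℂ => ((s * z.1, (0:ℂ) * z.2) : ℂ × ℂ)) ((z.1, 0)) 0 := by
        have hd1 : HasDerivAt (fun s : ℂ => s * z.1) z.1 0 := by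
          simpa using (hasDerivAt_id (0:ℂ)).mul_const z.1
        exact hd1.prodMk (hasDerivAt_const _ _)
      have h00 : (((0:ℂ) * z.1, (0:ℂ) * z.2) : ℂ × ℂ) = (0 : ℂ × ℂ) := by simp
      have hfd' : HasFDerivAt H (fderiv ℂ H 0) (((0:ℂ) * z.1, (0:ℂ) * z.2) : ℂ × ℂ) := by
        rw [h00]; exact hfd
      have hcm := hfd'.comp_hasDerivAt 0 hc
      have h2 := (ContinuousLinearMap.fst ℂ ℂ ℂ).hasFDerivAt.comp_hasDerivAt 0 hcm
      simp only [hfder] at h2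
      have h3 : HasDerivAt (F 0) (-z.1) 0 := by
        have hneg : (-((z.1, (0:ℂ)) : ℂ × ℂ)) = ((-z.1, (0:ℂ)) : ℂ × ℂ) := by simp
        rw [hneg] at h2
        exact h2
      exact h3.deriv
    have limA : Tendsto (fun w : ℂ => ((H (γ w)).1 - u (w * z.2)) / w ^ 2) (𝓝[≠] (0:ℂ))
        (𝓝 (-z.1)) := by
      rw [← hval0]
      apply limA0.congr'
      filter_upwards [self_mem_nhdsWithin] with w hw
      have hw' : (w:ℂ) ≠ 0 := hw
      have hw2 : (w:ℂ) ^ 2 ≠ 0 := pow_ne_zero _ hw'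
      rw [dslope_of_ne _ hw2, slope_def_field, sub_zero]
      show (F w (w ^ 2) - F w 0) / w ^ 2 = ((H (γ w)).1 - u (w * z.2)) / w ^ 2
      have e2 : F w 0 = u (w * z.2) := by
        show (H ((0:ℂ) * z.1, w * z.2)).1 = (H (0, w * z.2)).1
        rw [zero_mul]
      have e1 : F w (w ^ 2) = (H (γ w)).1 := rfl
      rw [e1, e2]
    have hsum := limA.add limU
    have heq2 : (-z.1) + q * z.2 ^ 2 = q * z.2 ^ 2 - z.1 := by ring
    rw [heq2] at hsum
    apply hsum.congr'
    filter_upwards [self_mem_nhdsWithin] with w hw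
    show ((H (γ w)).1 - u (w * z.2)) / w ^ 2 + u (w * z.2) / w ^ 2 = (H (γ w)).1 / w ^ 2
    rw [← add_div, sub_add_cancel]
  -- limit of G w / w ^ 3
  have limG : Tendsto (fun w => G w / w ^ 3) (𝓝[≠] (0:ℂ)) (𝓝 T) := by
    have := (lim1.const_mul ((starRingEnd ℂ) z.1)).add (lim2.const_mul ((starRingEnd ℂ) z.2))
    rw [hTdef]
    apply this.congr'
    filter_upwards [self_mem_nhdsWithin] with w hw
    have hw' : (w:ℂ) ≠ 0 := hw
    simp only [hGdef]
    field_simp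
  have coeff3 : p.coeff 3 = T := by
    have l3 := tendsto_div_pow_aux hpat 3 (by
      intro k hk
      interval_cases k
      · exact coeff0
      · exact coeff1
      · exact coeff2)
    exact tendsto_nhds_unique l3 limG
  -- the real part of coefficient 3 is ≤ 0 by the circle average
  have hre3 : (p.coeff 3).re ≤ 0 := by
    have hGcont : ContinuousOn G (closedBall (0:ℂ) 1) := hGdiff.continuousOn
    set e : ℝ → ℂ := circleMap 0 1 with hedef
    have he_norm : ∀ θ, ‖e θ‖ = 1 := by
      intro θ
      simp [hedef, norm_circleMap_zero]
    have he_ne : ∀ θ, e θ ≠ 0 := fun θ => by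
      intro h
      have := he_norm θ
      rw [h] at this
      simp at this
    have he_mem : ∀ θ, e θ ∈ closedBall (0:ℂ) 1 := fun θ => by
      rw [mem_closedBall_zero_iff]
      exact (he_norm θ).le
    set g : ℝ → ℂ := fun θ => ((e θ)⁻¹) ^ 3 * G (e θ) with hgdef
    have hg_cont : Continuous g := by
      have hce : Continuous e := continuous_circleMap 0 1
      have : Continuous fun θ => G (e θ) := hGcont.comp_continuous hce he_mem
      exact ((hce.inv₀ he_ne).pow 3).mul this
    have hInt : IntervalIntegrable g MeasureTheory.volume 0 (2 * π) :=
      hg_cont.intervalIntegrable 0 (2 * π)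
    -- coefficient 3 as an integral
    have coeff3_int : p.coeff 3 = (((2 * π)⁻¹ : ℝ) : ℂ) * ∫ θ in (0:ℝ)..(2 * π), g θ := by
      have happ := cauchyPowerSeries_apply G 0 1 3 1
      have hcoeff : p.coeff 3 = cauchyPowerSeries G 0 1 3 fun _ => 1 := rfl
      rw [hcoeff, happ]
      rw [circleIntegral]
      have hintegrand : ∀ θ : ℝ, deriv (circleMap 0 1) θ •
          ((1 / (circleMap 0 1 θ - 0)) ^ 3 • (circleMap 0 1 θ - 0)⁻¹ • G (circleMap 0 1 θ))
          = I * g θ := by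
        intro θ
        rw [deriv_circleMap]
        have hne := he_ne θ
        simp only [sub_zero, smul_eq_mul, hgdef, hedef]
        field_simp
      rw [intervalIntegral.integral_congr (fun θ _ => hintegrand θ)]
      rw [intervalIntegral.integral_const_mul]
      have hIne : (I : ℂ) ≠ 0 := I_ne_zero
      have hπ : (π : ℝ) ≠ 0 := Real.pi_ne_zero
      rw [smul_eq_mul, ← mul_assoc]
      congr 1
      rw [mul_inv, mul_assoc, inv_mul_cancel₀ hIne, mul_one]
      push_cast
      ring
    -- real part of the integral
    have hre_int : (p.coeff 3).re = (2 * π)⁻¹ * ∫ θ in (0:ℝ)..(2 * π), (g θ).re := by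
      rw [coeff3_int, re_ofReal_mul]
      congr 1
      have := Complex.reCLM.intervalIntegral_comp_comm hInt
      simpa using this.symm
    -- each integrand value is ≤ 0
    have hptw : ∀ θ : ℝ, (g θ).re ≤ 0 := by
      intro θ
      have hw : ‖e θ‖ = 1 := he_norm θ
      have hne := he_ne θ
      have hconj : (starRingEnd ℂ) (e θ) = (e θ)⁻¹ := by
        have h1 : (starRingEnd ℂ) (e θ) * e θ = 1 := by
          rw [mul_comm, Complex.mul_conj, Complex.normSq_eq_norm_sq,
            he_norm θ]
          norm_num
        exact eq_inv_of_mul_eq_one_left h1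
      have hmemθ : γ (e θ) ∈ B2 := hmem _ hw.le
      have hval : g θ = (H (γ (e θ))).1 * (starRingEnd ℂ) ((γ (e θ)).1)
          + (H (γ (e θ))).2 * (starRingEnd ℂ) ((γ (e θ)).2) := by
        simp only [hgdef, hGdef, hγdef, map_mul, map_pow, hconj]
        field_simp
      rw [hval]
      exact hineq _ hmemθ
    have hint_le : (∫ θ in (0:ℝ)..(2 * π), (g θ).re) ≤ 0 := by
      have hIntre : IntervalIntegrable (fun θ => (g θ).re) MeasureTheory.volume 0 (2 * π) :=
        (Complex.continuous_re.comp hg_cont).intervalIntegrable 0 (2 * π)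
      have := intervalIntegral.integral_mono_on (by positivity : (0:ℝ) ≤ 2 * π) hIntre
        intervalIntegrable_const (fun θ _ => hptw θ)
      simpa using this
    rw [hre_int]
    have : (0:ℝ) ≤ (2 * π)⁻¹ := by positivity
    exact mul_nonpos_of_nonneg_of_nonpos this hint_le
  -- conclusion
  have : ((-z.1 + q * z.2 ^ 2) * (starRingEnd ℂ) z.1 + (-z.2) * (starRingEnd ℂ) z.2) = T := by
    rw [hTdef]; ring
  rw [this, ← coeff3]
  exact hre3

/-- Shearing a vector field in the class `M₋` yields a vector field in `M₋`. -/
theorem shearing_mem_Mminus (H : ℂ × ℂ → ℂ × ℂ) (hH : MminusClass H) :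
    MminusClass (fun z : ℂ × ℂ => (-z.1 + shearCoef H * z.2 ^ 2, -z.2)) := by
  obtain ⟨hdiff, h0, hfder, hineq⟩ := hH
  refine ⟨?_, ?_, ?_, ?_⟩
  · apply Differentiable.differentiableOn
    fun_prop
  · simp
  · intro z
    have h1 : HasFDerivAt (fun z : ℂ × ℂ => -z.1 + shearCoef H * z.2 ^ 2)
        (-(ContinuousLinearMap.fst ℂ ℂ ℂ)) 0 := by
      have ha : HasFDerivAt (fun z : ℂ × ℂ => -z.1) (-(ContinuousLinearMap.fst ℂ ℂ ℂ))
          (0 : ℂ × ℂ) := (ContinuousLinearMap.fst ℂ ℂ ℂ).hasFDerivAt.neg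
      have hb : HasFDerivAt (fun z : ℂ × ℂ => shearCoef H * z.2 ^ 2) (0 : ℂ × ℂ →L[ℂ] ℂ)
          (0 : ℂ × ℂ) := by
        have hs : HasFDerivAt (fun z : ℂ × ℂ => z.2) (ContinuousLinearMap.snd ℂ ℂ ℂ)
            (0 : ℂ × ℂ) := (ContinuousLinearMap.snd ℂ ℂ ℂ).hasFDerivAt
        have h2 := ((hs.fun_mul hs).const_mul (shearCoef H))
        have heq : (fun z : ℂ × ℂ => shearCoef H * z.2 ^ 2)
            = fun z : ℂ × ℂ => shearCoef H * (z.2 * z.2) := by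
          funext w; ring
        rw [heq]
        exact h2.congr_fderiv (by ext <;> simp)
      simpa using ha.fun_add hb
    have h2 : HasFDerivAt (fun z : ℂ × ℂ => -z.2) (-(ContinuousLinearMap.snd ℂ ℂ ℂ))
        (0 : ℂ × ℂ) := (ContinuousLinearMap.snd ℂ ℂ ℂ).hasFDerivAt.neg
    have hder := h1.prodMk h2
    rw [hder.fderiv]
    rfl
  · intro z hz
    exact key_ineq H hdiff h0 hfder hineq z hz
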